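/- A proposition A has a classical proof if and only if its Kolmogorov–Gödel–Gentzen translation A′ has a constructive proof, where A′ is defined by: P′ = ¬¬P for atomic P; (∗)′ = ¬¬∗ for nullary connectives ∗ ∈ {⊤, ⊥}; (¬A)′ = ¬¬¬(A′); (A ∗ B)′ = ¬¬(A′ ∗ B′) for ∗ ∈ {∧, ∨, ⇒}; (∗x A)′ = ¬¬(∗x A′) for ∗ ∈ {∀, ∃}. -/

import Mathlib

/-- Terms: de Bruijn variables and a binary function symbol (union). -/
inductive Tm : Type where
  | var : Nat → Tm
  | cup : Tm → Tm → Tm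
deriving DecidableEq

def Tm.rename (f : Nat → Nat) : Tm → Tm
  | .var n => .var (f n)
  | .cup s t => .cup (s.rename f) (t.rename f)

def Tm.subst (σ : Nat → Tm) : Tm → Tm
  | .var n => σ n
  | .cup s t => .cup (s.subst σ) (t.subst σ)

/-- First-order formulas over Nat-indexed predicate symbols, de Bruijn binders. -/
inductive Fm : Type where
  | atom : Nat → List Tm → Fm
  | top : Fm
  | bot : Fm
  | neg : Fm → Fm
  | and : Fm → Fm → Fm
  | or : Fm → Fm → Fm
  | imp : Fm → Fm → Fm
  | all : Fm → Fm
  | ex : Fm → Fm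
deriving DecidableEq

def liftR (f : Nat → Nat) : Nat → Nat
  | 0 => 0
  | n + 1 => f n + 1

def liftS (σ : Nat → Tm) : Nat → Tm
  | 0 => .var 0
  | n + 1 => (σ n).rename Nat.succ

def Fm.rename (f : Nat → Nat) : Fm → Fm
  | .atom p l => .atom p (l.map (Tm.rename f))
  | .top => .top
  | .bot => .bot
  | .neg A => .neg (A.rename f)
  | .and A B => .and (A.rename f) (B.rename f)
  | .or A B => .or (A.rename f) (B.rename f)
  | .imp A B => .imp (A.rename f) (B.rename f)
  | .all A => .all (A.rename (liftR f))
  | .ex A => .ex (A.rename (liftR f))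

def Fm.subst (σ : Nat → Tm) : Fm → Fm
  | .atom p l => .atom p (l.map (Tm.subst σ))
  | .top => .top
  | .bot => .bot
  | .neg A => .neg (A.subst σ)
  | .and A B => .and (A.subst σ) (B.subst σ)
  | .or A B => .or (A.subst σ) (B.subst σ)
  | .imp A B => .imp (A.subst σ) (B.subst σ)
  | .all A => .all (A.subst (liftS σ))
  | .ex A => .ex (A.subst (liftS σ))

/-- Shift all free variables up by one. -/
def Fm.shift (A : Fm) : Fm := A.rename Nat.succ

/-- Instantiate the outermost bound variable with term `t` : `(t/x)A`. -/
def Fm.inst (t : Tm) (A : Fm) : Fm :=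
  A.subst (fun n => match n with | 0 => t | n + 1 => .var n)

/-- Double negation. -/
def Fm.dn (A : Fm) : Fm := .neg (.neg A)

/-- Cut-free classical multi-conclusion sequent calculus (Figure 1). -/
inductive Cl : List Fm → List Fm → Prop where
  | ax (A : Fm) : Cl [A] [A]
  | perm {Γ Γ' Δ Δ'} : Γ.Perm Γ' → Δ.Perm Δ' → Cl Γ Δ → Cl Γ' Δ'
  | contrL {Γ Δ A} : Cl (A :: A :: Γ) Δ → Cl (A :: Γ) Δ
  | contrR {Γ Δ A} : Cl Γ (A :: A :: Δ) → Cl Γ (A :: Δ)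
  | weakL {Γ Δ A} : Cl Γ Δ → Cl (A :: Γ) Δ
  | weakR {Γ Δ A} : Cl Γ Δ → Cl Γ (A :: Δ)
  | topR {Γ Δ} : Cl Γ (.top :: Δ)
  | botL {Γ Δ} : Cl (.bot :: Γ) Δ
  | negL {Γ Δ A} : Cl Γ (A :: Δ) → Cl (.neg A :: Γ) Δ
  | negR {Γ Δ A} : Cl (A :: Γ) Δ → Cl Γ (.neg A :: Δ)
  | andL {Γ Δ A B} : Cl (A :: B :: Γ) Δ → Cl (.and A B :: Γ) Δ
  | andR {Γ Δ A B} : Cl Γ (A :: Δ) → Cl Γ (B :: Δ) → Cl Γ (.and A B :: Δ)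
  | orL {Γ Δ A B} : Cl (A :: Γ) Δ → Cl (B :: Γ) Δ → Cl (.or A B :: Γ) Δ
  | orR1 {Γ Δ A B} : Cl Γ (A :: Δ) → Cl Γ (.or A B :: Δ)
  | orR2 {Γ Δ A B} : Cl Γ (B :: Δ) → Cl Γ (.or A B :: Δ)
  | impL {Γ Δ A B} : Cl Γ (A :: Δ) → Cl (B :: Γ) Δ → Cl (.imp A B :: Γ) Δ
  | impR {Γ Δ A B} : Cl (A :: Γ) (B :: Δ) → Cl Γ (.imp A B :: Δ)
  | allL {Γ Δ A} (t : Tm) : Cl (A.inst t :: Γ) Δ → Cl (.all A :: Γ) Δ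
  | allR {Γ Δ A} : Cl (Γ.map Fm.shift) (A :: Δ.map Fm.shift) → Cl Γ (.all A :: Δ)
  | exL {Γ Δ A} : Cl (A :: Γ.map Fm.shift) (Δ.map Fm.shift) → Cl (.ex A :: Γ) Δ
  | exR {Γ Δ A} (t : Tm) : Cl Γ (A.inst t :: Δ) → Cl Γ (.ex A :: Δ)

/-- Constructive (intuitionistic) single-conclusion sequent calculus:
the restriction of the classical calculus to sequents with at most one
conclusion, with the adapted ⇒-left rule. -/
inductive Intu : List Fm → Option Fm → Prop where
  | ax (A : Fm) : Intu [A] (some A)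
  | perm {Γ Γ' Δ} : Γ.Perm Γ' → Intu Γ Δ → Intu Γ' Δ
  | contrL {Γ Δ A} : Intu (A :: A :: Γ) Δ → Intu (A :: Γ) Δ
  | weakL {Γ Δ A} : Intu Γ Δ → Intu (A :: Γ) Δ
  | weakR {Γ A} : Intu Γ none → Intu Γ (some A)
  | topR {Γ} : Intu Γ (some .top)
  | botL {Γ Δ} : Intu (.bot :: Γ) Δ
  | negL {Γ A} : Intu Γ (some A) → Intu (.neg A :: Γ) none
  | negR {Γ A} : Intu (A :: Γ) none → Intu Γ (some (.neg A))
  | andL {Γ Δ A B} : Intu (A :: B :: Γ) Δ → Intu (.and A B :: Γ) Δ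
  | andR {Γ A B} : Intu Γ (some A) → Intu Γ (some B) → Intu Γ (some (.and A B))
  | orL {Γ Δ A B} : Intu (A :: Γ) Δ → Intu (B :: Γ) Δ → Intu (.or A B :: Γ) Δ
  | orR1 {Γ A B} : Intu Γ (some A) → Intu Γ (some (.or A B))
  | orR2 {Γ A B} : Intu Γ (some B) → Intu Γ (some (.or A B))
  | impL {Γ Δ A B} : Intu Γ (some A) → Intu (B :: Γ) Δ → Intu (.imp A B :: Γ) Δ
  | impR {Γ A B} : Intu (A :: Γ) (some B) → Intu Γ (some (.imp A B))
  | allL {Γ Δ A} (t : Tm) : Intu (A.inst t :: Γ) Δ → Intu (.all A :: Γ) Δ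
  | allR {Γ A} : Intu (Γ.map Fm.shift) (some A) → Intu Γ (some (.all A))
  | exL {Γ Δ A} : Intu (A :: Γ.map Fm.shift) (Δ.map Fm.shift) → Intu (.ex A :: Γ) Δ
  | exR {Γ A} (t : Tm) : Intu Γ (some (A.inst t)) → Intu Γ (some (.ex A))

/-- Dowek's translation ‖·‖: double negations both before and after each
connective and quantifier, atoms unchanged. -/
def Fm.bar : Fm → Fm
  | .atom p l => .atom p l
  | .top => Fm.dn .top
  | .bot => Fm.dn .bot
  | .neg A => Fm.dn (Fm.dn (.neg A.bar))
  | .and A B => Fm.dn (.and (Fm.dn A.bar) (Fm.dn B.bar))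
  | .or A B => Fm.dn (.or (Fm.dn A.bar) (Fm.dn B.bar))
  | .imp A B => Fm.dn (.imp (Fm.dn A.bar) (Fm.dn B.bar))
  | .all A => Fm.dn (.all (Fm.dn A.bar))
  | .ex A => Fm.dn (.ex (Fm.dn A.bar))

/-- The light translation |·|: like ‖·‖ but the outermost double negation
is removed. -/
def Fm.light : Fm → Fm
  | .atom p l => .atom p l
  | .top => .top
  | .bot => .bot
  | .neg A => .neg (Fm.dn A.bar)
  | .and A B => .and (Fm.dn A.bar) (Fm.dn B.bar)
  | .or A B => .or (Fm.dn A.bar) (Fm.dn B.bar)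
  | .imp A B => .imp (Fm.dn A.bar) (Fm.dn B.bar)
  | .all A => .all (Fm.dn A.bar)
  | .ex A => .ex (Fm.dn A.bar)

/-- A formula is atomic if it is of the form `atom p l`. -/
def Fm.isAtom : Fm → Prop
  | .atom _ _ => True
  | _ => False


/-- The Kolmogorov–Gödel–Gentzen double-negation translation. -/
def Fm.kgg : Fm → Fm
  | .atom p l => Fm.dn (.atom p l)
  | .top => Fm.dn .top
  | .bot => Fm.dn .bot
  | .neg A => Fm.dn (.neg A.kgg)
  | .and A B => Fm.dn (.and A.kgg B.kgg)
  | .or A B => Fm.dn (.or A.kgg B.kgg)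
  | .imp A B => Fm.dn (.imp A.kgg B.kgg)
  | .all A => Fm.dn (.all A.kgg)
  | .ex A => Fm.dn (.ex A.kgg)

/-! ### Auxiliary substitution lemmas -/

theorem Tm.subst_rename (f : Nat → Nat) (σ : Nat → Tm) (t : Tm) :
    (t.rename f).subst σ = t.subst (fun n => σ (f n)) := by
  induction t with
  | var n => rfl
  | cup s t ihs iht => simp [Tm.rename, Tm.subst, ihs, iht]

theorem liftS_liftR (σ : Nat → Tm) (f : Nat → Nat) :
    (fun n => liftS σ (liftR f n)) = liftS (fun n => σ (f n)) := by
  funext n; cases n <;> rfl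

theorem Fm.subst_rename (A : Fm) : ∀ (f : Nat → Nat) (σ : Nat → Tm),
    (A.rename f).subst σ = A.subst (fun n => σ (f n)) := by
  induction A with
  | atom p l => intro f σ; simp [Fm.rename, Fm.subst, Tm.subst_rename]
  | top => intro f σ; rfl
  | bot => intro f σ; rfl
  | neg A ih => intro f σ; simp [Fm.rename, Fm.subst, ih]
  | and A B ihA ihB => intro f σ; simp [Fm.rename, Fm.subst, ihA, ihB]
  | or A B ihA ihB => intro f σ; simp [Fm.rename, Fm.subst, ihA, ihB]
  | imp A B ihA ihB => intro f σ; simp [Fm.rename, Fm.subst, ihA, ihB]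
  | all A ih => intro f σ; simp [Fm.rename, Fm.subst, ih, liftS_liftR]
  | ex A ih => intro f σ; simp [Fm.rename, Fm.subst, ih, liftS_liftR]

theorem Tm.subst_var (t : Tm) : t.subst (fun n => .var n) = t := by
  induction t with
  | var n => rfl
  | cup s t ihs iht => simp [Tm.subst, ihs, iht]

theorem liftS_var : liftS (fun n => Tm.var n) = fun n => Tm.var n := by
  funext n; cases n <;> rfl

theorem Fm.subst_var (A : Fm) : A.subst (fun n => .var n) = A := by
  induction A with
  | atom p l =>
    simp only [Fm.subst, show (Tm.subst fun n => Tm.var n) = id from funext Tm.subst_var,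
      List.map_id]
  | top => rfl
  | bot => rfl
  | neg A ih => simp [Fm.subst, ih]
  | and A B ihA ihB => simp [Fm.subst, ihA, ihB]
  | or A B ihA ihB => simp [Fm.subst, ihA, ihB]
  | imp A B ihA ihB => simp [Fm.subst, ihA, ihB]
  | all A ih => simp [Fm.subst, liftS_var, ih]
  | ex A ih => simp [Fm.subst, liftS_var, ih]

theorem rename_inst0 (A : Fm) : (A.rename (liftR Nat.succ)).inst (.var 0) = A := by
  unfold Fm.inst
  rw [Fm.subst_rename]
  have : (fun n => (fun n => match n with | 0 => Tm.var 0 | n + 1 => Tm.var n) (liftR Nat.succ n))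
      = fun n => Tm.var n := by
    funext n; cases n <;> rfl
  rw [this, Fm.subst_var]

/-! ### The inner part of the kgg translation -/

def Fm.kin : Fm → Fm
  | .atom p l => .atom p l
  | .top => .top
  | .bot => .bot
  | .neg A => .neg A.kgg
  | .and A B => .and A.kgg B.kgg
  | .or A B => .or A.kgg B.kgg
  | .imp A B => .imp A.kgg B.kgg
  | .all A => .all A.kgg
  | .ex A => .ex A.kgg

theorem kgg_eq (A : Fm) : A.kgg = .neg (.neg A.kin) := by
  cases A <;> rfl

theorem kgg_rename (A : Fm) : ∀ f, (A.rename f).kgg = A.kgg.rename f := by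
  induction A with
  | atom p l => intro f; rfl
  | top => intro f; rfl
  | bot => intro f; rfl
  | neg A ih => intro f; simp [Fm.rename, Fm.kgg, Fm.dn, ih]
  | and A B ihA ihB => intro f; simp [Fm.rename, Fm.kgg, Fm.dn, ihA, ihB]
  | or A B ihA ihB => intro f; simp [Fm.rename, Fm.kgg, Fm.dn, ihA, ihB]
  | imp A B ihA ihB => intro f; simp [Fm.rename, Fm.kgg, Fm.dn, ihA, ihB]
  | all A ih => intro f; simp [Fm.rename, Fm.kgg, Fm.dn, ih]
  | ex A ih => intro f; simp [Fm.rename, Fm.kgg, Fm.dn, ih]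

theorem kgg_subst (A : Fm) : ∀ σ, (A.subst σ).kgg = A.kgg.subst σ := by
  induction A with
  | atom p l => intro σ; rfl
  | top => intro σ; rfl
  | bot => intro σ; rfl
  | neg A ih => intro σ; simp [Fm.subst, Fm.kgg, Fm.dn, ih]
  | and A B ihA ihB => intro σ; simp [Fm.subst, Fm.kgg, Fm.dn, ihA, ihB]
  | or A B ihA ihB => intro σ; simp [Fm.subst, Fm.kgg, Fm.dn, ihA, ihB]
  | imp A B ihA ihB => intro σ; simp [Fm.subst, Fm.kgg, Fm.dn, ihA, ihB]
  | all A ih => intro σ; simp [Fm.subst, Fm.kgg, Fm.dn, ih]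
  | ex A ih => intro σ; simp [Fm.subst, Fm.kgg, Fm.dn, ih]

theorem kgg_inst (A : Fm) (t : Tm) : (A.inst t).kgg = A.kgg.inst t := by
  unfold Fm.inst; exact kgg_subst A _

theorem kgg_shift (A : Fm) : (A.shift).kgg = A.kgg.shift := by
  unfold Fm.shift; exact kgg_rename A _

theorem kin_rename (A : Fm) (f : Nat → Nat) : (A.rename f).kin = A.kin.rename f := by
  cases A <;> simp [Fm.rename, Fm.kin, kgg_rename]

theorem kin_shift (A : Fm) : (A.shift).kin = A.kin.shift := by
  unfold Fm.shift; exact kin_rename A _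
/-! ### Structural helpers for Cl -/

theorem Cl.dnL {Γ Δ C} (h : Cl (C :: Γ) Δ) : Cl (.neg (.neg C) :: Γ) Δ :=
  .negL (.negR h)

theorem Cl.dnR {Γ Δ C} (h : Cl Γ (C :: Δ)) : Cl Γ (.neg (.neg C) :: Δ) :=
  .negR (.negL h)

theorem Cl.weakLs {Γ Δ} (Ξ : List Fm) (h : Cl Γ Δ) : Cl (Ξ ++ Γ) Δ := by
  induction Ξ with
  | nil => exact h
  | cons A Ξ ih => exact .weakL ih

theorem Cl.weakRs {Γ Δ} (Θ : List Fm) (h : Cl Γ Δ) : Cl Γ (Θ ++ Δ) := by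
  induction Θ with
  | nil => exact h
  | cons A Θ ih => exact .weakR ih

theorem Cl.weak {Γ₀ Δ₀} (h : Cl Γ₀ Δ₀) (Γ Δ : List Fm) : Cl (Γ₀ ++ Γ) (Δ₀ ++ Δ) :=
  .perm List.perm_append_comm List.perm_append_comm (Cl.weakLs Γ (Cl.weakRs Δ h))

theorem Cl.contr_memL {Γ Δ C} (hC : C ∈ Γ) (h : Cl (C :: Γ) Δ) : Cl Γ Δ := by
  have hp : Γ.Perm (C :: Γ.erase C) := List.perm_cons_erase hC
  refine .perm hp.symm (List.Perm.refl _) (.contrL ?_)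
  exact .perm (hp.cons C) (List.Perm.refl _) h

theorem Cl.contr_memR {Γ Δ C} (hC : C ∈ Δ) (h : Cl Γ (C :: Δ)) : Cl Γ Δ := by
  have hp : Δ.Perm (C :: Δ.erase C) := List.perm_cons_erase hC
  refine .perm (List.Perm.refl _) hp.symm (.contrR ?_)
  exact .perm (List.Perm.refl _) (hp.cons C) h

/-! ### Double negation towers and availability -/

def dnk : Nat → Fm → Fm
  | 0, C => C
  | k + 1, C => .neg (.neg (dnk k C))

theorem dnk_neg (k : Nat) (C : Fm) : dnk k (.neg C) = .neg (dnk k C) := by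
  induction k with
  | zero => rfl
  | succ k ih => simp [dnk, ih]

theorem dnk_dn (k : Nat) (C : Fm) : dnk k (.neg (.neg C)) = dnk (k + 1) C := by
  simp [dnk, dnk_neg]

theorem dnk_rename (k : Nat) (C : Fm) (f : Nat → Nat) :
    (dnk k C).rename f = dnk k (C.rename f) := by
  induction k with
  | zero => rfl
  | succ k ih => simp [dnk, Fm.rename, ih]

def LAv (C : Fm) (Γ Δ : List Fm) : Prop := ∃ k, dnk k C ∈ Γ ∨ .neg (dnk k C) ∈ Δ

def RAv (C : Fm) (Γ Δ : List Fm) : Prop := ∃ k, dnk k C ∈ Δ ∨ .neg (dnk k C) ∈ Γ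

theorem LAv_mono {C Γ Δ Γ' Δ'} (h : LAv C Γ Δ) (hΓ : Γ ⊆ Γ') (hΔ : Δ ⊆ Δ') : LAv C Γ' Δ' := by
  obtain ⟨k, h | h⟩ := h
  · exact ⟨k, Or.inl (hΓ h)⟩
  · exact ⟨k, Or.inr (hΔ h)⟩

theorem RAv_mono {C Γ Δ Γ' Δ'} (h : RAv C Γ Δ) (hΓ : Γ ⊆ Γ') (hΔ : Δ ⊆ Δ') : RAv C Γ' Δ' := by
  obtain ⟨k, h | h⟩ := h
  · exact ⟨k, Or.inl (hΔ h)⟩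
  · exact ⟨k, Or.inr (hΓ h)⟩

theorem RAv_of_LAv_neg {D Γ Δ} (h : LAv (.neg D) Γ Δ) : RAv D Γ Δ := by
  obtain ⟨k, h | h⟩ := h
  · rw [dnk_neg] at h; exact ⟨k, Or.inr h⟩
  · rw [dnk_neg] at h; exact ⟨k + 1, Or.inl h⟩

theorem LAv_of_RAv_neg {D Γ Δ} (h : RAv (.neg D) Γ Δ) : LAv D Γ Δ := by
  obtain ⟨k, h | h⟩ := h
  · rw [dnk_neg] at h; exact ⟨k, Or.inr h⟩
  · rw [dnk_neg] at h; exact ⟨k + 1, Or.inl h⟩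

theorem LAv_rename {C Γ Δ} (f : Nat → Nat) (h : LAv C Γ Δ) :
    LAv (C.rename f) (Γ.map (Fm.rename f)) (Δ.map (Fm.rename f)) := by
  obtain ⟨k, h | h⟩ := h
  · exact ⟨k, Or.inl (by rw [← dnk_rename]; exact List.mem_map_of_mem h)⟩
  · refine ⟨k, Or.inr ?_⟩
    have := List.mem_map_of_mem (f := Fm.rename f) h
    simpa [Fm.rename, dnk_rename] using this

theorem RAv_rename {C Γ Δ} (f : Nat → Nat) (h : RAv C Γ Δ) :
    RAv (C.rename f) (Γ.map (Fm.rename f)) (Δ.map (Fm.rename f)) := by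
  obtain ⟨k, h | h⟩ := h
  · exact ⟨k, Or.inl (by rw [← dnk_rename]; exact List.mem_map_of_mem h)⟩
  · refine ⟨k, Or.inr ?_⟩
    have := List.mem_map_of_mem (f := Fm.rename f) h
    simpa [Fm.rename, dnk_rename] using this

theorem LAv_elim {Γ Δ C} (h : LAv C Γ Δ) (hd : Cl (C :: Γ) Δ) : Cl Γ Δ := by
  obtain ⟨k, hk⟩ := h
  induction k generalizing C with
  | zero =>
    rcases hk with hk | hk
    · exact Cl.contr_memL hk hd
    · exact Cl.contr_memR hk (.negR hd)
  | succ k ih =>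
    rw [show dnk (k+1) C = dnk k (.neg (.neg C)) from (dnk_dn k C).symm] at hk
    exact ih (Cl.dnL hd) hk

theorem RAv_elim {Γ Δ C} (h : RAv C Γ Δ) (hd : Cl Γ (C :: Δ)) : Cl Γ Δ := by
  obtain ⟨k, hk⟩ := h
  induction k generalizing C with
  | zero =>
    rcases hk with hk | hk
    · exact Cl.contr_memR hk hd
    · exact Cl.contr_memL hk (.negL hd)
  | succ k ih =>
    rw [show dnk (k+1) C = dnk k (.neg (.neg C)) from (dnk_dn k C).symm] at hk
    exact ih (Cl.dnR hd) hk
/-! ### The erasure relation -/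

inductive Er : Fm → Fm → Prop where
  | atom (p l) : Er (.atom p l) (.atom p l)
  | top : Er .top .top
  | bot : Er .bot .bot
  | dn {X C} : Er X C → Er (.neg (.neg X)) C
  | neg {X C} : Er X C → Er (.neg X) (.neg C)
  | and {X Y C D} : Er X C → Er Y D → Er (.and X Y) (.and C D)
  | or {X Y C D} : Er X C → Er Y D → Er (.or X Y) (.or C D)
  | imp {X Y C D} : Er X C → Er Y D → Er (.imp X Y) (.imp C D)
  | all {X C} : Er X C → Er (.all X) (.all C)
  | ex {X C} : Er X C → Er (.ex X) (.ex C)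

theorem er_kgg (A : Fm) : Er A.kgg A := by
  induction A with
  | atom p l => exact .dn (.atom p l)
  | top => exact .dn .top
  | bot => exact .dn .bot
  | neg A ih => exact .dn (.neg ih)
  | and A B ihA ihB => exact .dn (.and ihA ihB)
  | or A B ihA ihB => exact .dn (.or ihA ihB)
  | imp A B ihA ihB => exact .dn (.imp ihA ihB)
  | all A ih => exact .dn (.all ih)
  | ex A ih => exact .dn (.ex ih)

theorem Er.rename {F C} (h : Er F C) (f : Nat → Nat) : Er (F.rename f) (C.rename f) := by
  induction h generalizing f with
  | atom p l => exact .atom p _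
  | top => exact .top
  | bot => exact .bot
  | dn _ ih => exact .dn (ih f)
  | neg _ ih => exact .neg (ih f)
  | and _ _ ih1 ih2 => exact .and (ih1 f) (ih2 f)
  | or _ _ ih1 ih2 => exact .or (ih1 f) (ih2 f)
  | imp _ _ ih1 ih2 => exact .imp (ih1 f) (ih2 f)
  | all _ ih => exact .all (ih (liftR f))
  | ex _ ih => exact .ex (ih (liftR f))

theorem Er.subst {F C} (h : Er F C) (σ : Nat → Tm) : Er (F.subst σ) (C.subst σ) := by
  induction h generalizing σ with
  | atom p l => exact .atom p _
  | top => exact .top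
  | bot => exact .bot
  | dn _ ih => exact .dn (ih σ)
  | neg _ ih => exact .neg (ih σ)
  | and _ _ ih1 ih2 => exact .and (ih1 σ) (ih2 σ)
  | or _ _ ih1 ih2 => exact .or (ih1 σ) (ih2 σ)
  | imp _ _ ih1 ih2 => exact .imp (ih1 σ) (ih2 σ)
  | all _ ih => exact .all (ih (liftS σ))
  | ex _ ih => exact .ex (ih (liftS σ))

theorem Er.inst {F C} (h : Er F C) (t : Tm) : Er (F.inst t) (C.inst t) := h.subst _

/-! ### Formula size -/

def Fm.sz : Fm → Nat
  | .atom _ _ => 1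
  | .top => 1
  | .bot => 1
  | .neg A => A.sz + 1
  | .and A B => A.sz + B.sz + 1
  | .or A B => A.sz + B.sz + 1
  | .imp A B => A.sz + B.sz + 1
  | .all A => A.sz + 1
  | .ex A => A.sz + 1

theorem Fm.sz_pos (A : Fm) : 1 ≤ A.sz := by cases A <;> simp [Fm.sz]
/-! ### Interchange lemmas for erasures -/

theorem erTriple : ∀ n : Nat,
    (∀ F C C', F.sz ≤ n → Er F C → Er F C' → Cl [C] [C']) ∧
    (∀ F C C', F.sz ≤ n → Er F C → Er (.neg F) C' → Cl [C, C'] []) ∧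
    (∀ F C C', F.sz ≤ n → Er F C → Er (.neg F) C' → Cl [] [C, C']) := by
  intro n
  induction n using Nat.strong_induction_on with
  | _ n IH =>
    have i1 : ∀ F C C', F.sz ≤ n → Er F C → Er F C' → Cl [C] [C'] := by
      intro F C C' hsz h1 h2
      have hn1 : 1 ≤ n := le_trans (Fm.sz_pos F) hsz
      cases h1 with
      | atom p l => cases h2 with | atom => exact .ax _
      | top => cases h2 with | top => exact .ax _
      | bot => cases h2 with | bot => exact .ax _
      | neg h1' =>
        rename_i X D
        cases h2 with
        | neg h2' =>
          rename_i D'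
          refine .negR (.perm (List.Perm.swap _ _ _) (List.Perm.refl _) (.negL ?_))
          exact (IH (n-1) (by omega)).1 X D' D (by simp [Fm.sz] at hsz ⊢; omega) h2' h1'
        | dn h2' =>
          rename_i Y
          refine .negL ?_
          refine .perm (List.Perm.refl _) (List.Perm.swap _ _ _) ?_
          exact (IH (n-1) (by omega)).2.2 Y C' D (by simp [Fm.sz] at hsz ⊢; omega) h2' h1'
      | dn h1' =>
        rename_i X
        cases h2 with
        | dn h2' =>
          exact (IH (n-1) (by omega)).1 X C C' (by simp [Fm.sz] at hsz ⊢; omega) h1' h2'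
        | neg h2'' =>
          rename_i D'
          cases h2'' with
          | neg h2' =>
            rename_i E'
            refine Cl.dnR ?_
            exact (IH (n-1) (by omega)).1 X C E' (by simp [Fm.sz] at hsz ⊢; omega) h1' h2'
          | dn h2' =>
            rename_i Y
            refine .negR ?_
            exact (IH (n-1) (by omega)).2.1 Y D' C (by simp [Fm.sz] at hsz ⊢; omega) h2' h1'
      | and h1a h1b =>
        rename_i X Y D E
        cases h2 with
        | and h2a h2b =>
          rename_i D' E'
          refine .andL (.andR ?_ ?_)
          · have := (IH (n-1) (by omega)).1 X D D' (by simp [Fm.sz] at hsz ⊢; omega) h1a h2a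
            exact .perm (List.Perm.swap _ _ _) (List.Perm.refl _) (.weakL this)
          · have := (IH (n-1) (by omega)).1 Y E E' (by simp [Fm.sz] at hsz ⊢; omega) h1b h2b
            exact .weakL this
      | or h1a h1b =>
        rename_i X Y D E
        cases h2 with
        | or h2a h2b =>
          rename_i D' E'
          refine .orL (.orR1 ?_) (.orR2 ?_)
          · exact (IH (n-1) (by omega)).1 X D D' (by simp [Fm.sz] at hsz ⊢; omega) h1a h2a
          · exact (IH (n-1) (by omega)).1 Y E E' (by simp [Fm.sz] at hsz ⊢; omega) h1b h2b
      | imp h1a h1b =>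
        rename_i X Y D E
        cases h2 with
        | imp h2a h2b =>
          rename_i D' E'
          refine .impR (.perm (List.Perm.swap _ _ _) (List.Perm.refl _) (.impL ?_ ?_))
          · have := (IH (n-1) (by omega)).1 X D' D (by simp [Fm.sz] at hsz ⊢; omega) h2a h1a
            exact .perm (List.Perm.refl _) (List.Perm.swap _ _ _) (.weakR this)
          · have := (IH (n-1) (by omega)).1 Y E E' (by simp [Fm.sz] at hsz ⊢; omega) h1b h2b
            exact .perm (List.Perm.swap _ _ _) (List.Perm.refl _) (.weakL this)
      | all h1' =>
        rename_i X D
        cases h2 with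
        | all h2' =>
          rename_i D'
          refine .allR ?_
          show Cl [Fm.shift (.all D)] [D']
          have : Fm.shift (.all D) = .all (D.rename (liftR Nat.succ)) := rfl
          rw [this]
          refine .allL (.var 0) ?_
          rw [rename_inst0]
          exact (IH (n-1) (by omega)).1 X D D' (by simp [Fm.sz] at hsz ⊢; omega) h1' h2'
      | ex h1' =>
        rename_i X D
        cases h2 with
        | ex h2' =>
          rename_i D'
          refine .exL ?_
          show Cl [D] [Fm.shift (.ex D')]
          have : Fm.shift (.ex D') = .ex (D'.rename (liftR Nat.succ)) := rfl
          rw [this]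
          refine .exR (.var 0) ?_
          rw [rename_inst0]
          exact (IH (n-1) (by omega)).1 X D D' (by simp [Fm.sz] at hsz ⊢; omega) h1' h2'
    refine ⟨i1, ?_, ?_⟩
    · intro F C C' hsz h1 h2
      have hn1 : 1 ≤ n := le_trans (Fm.sz_pos F) hsz
      cases h2 with
      | neg h2' =>
        rename_i D'
        refine .perm (List.Perm.swap _ _ _) (List.Perm.refl _) (.negL ?_)
        exact i1 F C D' hsz h1 h2'
      | dn h2' =>
        rename_i Y
        -- F = .neg Y, h2' : Er Y C', h1 : Er (.neg Y) C
        refine .perm (List.Perm.swap _ _ _) (List.Perm.refl _) ?_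
        exact (IH (n-1) (by omega)).2.1 Y C' C (by simp [Fm.sz] at hsz; omega) h2' h1
    · intro F C C' hsz h1 h2
      have hn1 : 1 ≤ n := le_trans (Fm.sz_pos F) hsz
      cases h2 with
      | neg h2' =>
        rename_i D'
        refine .perm (List.Perm.refl _) (List.Perm.swap _ _ _) (.negR ?_)
        exact i1 F D' C hsz h2' h1
      | dn h2' =>
        rename_i Y
        refine .perm (List.Perm.refl _) (List.Perm.swap _ _ _) ?_
        exact (IH (n-1) (by omega)).2.2 Y C' C (by simp [Fm.sz] at hsz; omega) h2' h1
theorem er_i1 {F C C'} (h1 : Er F C) (h2 : Er F C') : Cl [C] [C'] :=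
  (erTriple F.sz).1 F C C' le_rfl h1 h2

theorem er_i2a {F C C'} (h1 : Er F C) (h2 : Er (.neg F) C') : Cl [C, C'] [] :=
  (erTriple F.sz).2.1 F C C' le_rfl h1 h2

theorem er_i2b {F C C'} (h1 : Er F C) (h2 : Er (.neg F) C') : Cl [] [C, C'] :=
  (erTriple F.sz).2.2 F C C' le_rfl h1 h2

/-! ### Matchings -/

def LM (A : Fm) (Γ Δ : List Fm) : Prop :=
  (∃ C, Er A C ∧ LAv C Γ Δ) ∨ (∃ X C, A = .neg X ∧ Er X C ∧ RAv C Γ Δ)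

def RM (A : Fm) (Γ Δ : List Fm) : Prop :=
  (∃ C, Er A C ∧ RAv C Γ Δ) ∨ (∃ X C, A = .neg X ∧ Er X C ∧ LAv C Γ Δ)

theorem LM_mono {A Γ Δ Γ' Δ'} (h : LM A Γ Δ) (hΓ : Γ ⊆ Γ') (hΔ : Δ ⊆ Δ') : LM A Γ' Δ' := by
  rcases h with ⟨C, he, ha⟩ | ⟨X, C, hx, he, ha⟩
  · exact Or.inl ⟨C, he, LAv_mono ha hΓ hΔ⟩
  · exact Or.inr ⟨X, C, hx, he, RAv_mono ha hΓ hΔ⟩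

theorem RM_mono {A Γ Δ Γ' Δ'} (h : RM A Γ Δ) (hΓ : Γ ⊆ Γ') (hΔ : Δ ⊆ Δ') : RM A Γ' Δ' := by
  rcases h with ⟨C, he, ha⟩ | ⟨X, C, hx, he, ha⟩
  · exact Or.inl ⟨C, he, RAv_mono ha hΓ hΔ⟩
  · exact Or.inr ⟨X, C, hx, he, LAv_mono ha hΓ hΔ⟩

theorem LM_shift {A Γ Δ} (h : LM A Γ Δ) :
    LM A.shift (Γ.map Fm.shift) (Δ.map Fm.shift) := by
  rcases h with ⟨C, he, ha⟩ | ⟨X, C, hx, he, ha⟩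
  · exact Or.inl ⟨C.shift, he.rename _, LAv_rename _ ha⟩
  · refine Or.inr ⟨X.shift, C.shift, ?_, he.rename _, RAv_rename _ ha⟩
    rw [hx]; rfl

theorem RM_shift {A Γ Δ} (h : RM A Γ Δ) :
    RM A.shift (Γ.map Fm.shift) (Δ.map Fm.shift) := by
  rcases h with ⟨C, he, ha⟩ | ⟨X, C, hx, he, ha⟩
  · exact Or.inl ⟨C.shift, he.rename _, RAv_rename _ ha⟩
  · refine Or.inr ⟨X.shift, C.shift, ?_, he.rename _, LAv_rename _ ha⟩
    rw [hx]; rfl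
/-! ### Backward direction: constructive proofs of translations give classical proofs -/

theorem bmain {Γ δ} (h : Intu Γ δ) : ∀ Γ' Δ',
    (∀ A ∈ Γ, LM A Γ' Δ') → (∀ A, δ = some A → RM A Γ' Δ') → Cl Γ' Δ' := by
  induction h with
  | ax A =>
    intro Γ' Δ' hL hR
    have hlm := hL A (by simp)
    have hrm := hR A rfl
    rcases hlm with ⟨C, he1, la⟩ | ⟨X, C, hx, he1, ra⟩
    · rcases hrm with ⟨C', he2, ra'⟩ | ⟨X', C', hx', he2, la'⟩
      · refine RAv_elim ra' ?_
        refine LAv_elim (LAv_mono la (fun _ h => h) (fun _ h => List.mem_cons_of_mem _ h)) ?_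
        exact Cl.weak (er_i1 he1 he2) Γ' Δ'
      · subst hx'
        refine LAv_elim la' ?_
        refine LAv_elim (LAv_mono la (fun _ h => List.mem_cons_of_mem _ h) (fun _ h => h)) ?_
        have := Cl.weak (er_i2a he2 he1) Γ' Δ'
        exact .perm (List.Perm.swap _ _ _) (List.Perm.refl _) this
    · subst hx
      rcases hrm with ⟨C', he2, ra'⟩ | ⟨X', C', hx', he2, la'⟩
      · refine RAv_elim ra' ?_
        refine RAv_elim (RAv_mono ra (fun _ h => h) (fun _ h => List.mem_cons_of_mem _ h)) ?_
        exact Cl.weak (er_i2b he1 he2) Γ' Δ'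
      · injection hx' with hx'
        subst hx'
        refine RAv_elim ra ?_
        refine LAv_elim (LAv_mono la' (fun _ h => h) (fun _ h => List.mem_cons_of_mem _ h)) ?_
        exact Cl.weak (er_i1 he2 he1) Γ' Δ'
  | perm p _ ih =>
    intro Γ' Δ' hL hR
    exact ih Γ' Δ' (fun A hA => hL A (p.subset hA)) hR
  | contrL _ ih =>
    intro Γ' Δ' hL hR
    refine ih Γ' Δ' (fun A hA => hL A ?_) hR
    simp only [List.mem_cons] at hA ⊢
    tauto
  | weakL _ ih =>
    intro Γ' Δ' hL hR
    exact ih Γ' Δ' (fun A hA => hL A (List.mem_cons_of_mem _ hA)) hR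
  | weakR _ ih =>
    intro Γ' Δ' hL hR
    exact ih Γ' Δ' hL (fun A hA => nomatch hA)
  | topR =>
    intro Γ' Δ' hL hR
    rcases hR .top rfl with ⟨C, he, ra⟩ | ⟨X, C, hx, he, la⟩
    · cases he with
      | top => exact RAv_elim ra Cl.topR
    · simp at hx
  | botL =>
    intro Γ' Δ' hL hR
    rcases hL .bot (by simp) with ⟨C, he, la⟩ | ⟨X, C, hx, he, ra⟩
    · cases he with
      | bot => exact LAv_elim la Cl.botL
    · simp at hx
  | negL _ ih =>
    intro Γ' Δ' hL hR
    rename_i Γ A _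
    have hrm : RM A Γ' Δ' := by
      rcases hL (.neg A) (by simp) with ⟨C, he, la⟩ | ⟨X, C, hx, he, ra⟩
      · cases he with
        | neg he' => exact Or.inl ⟨_, he', RAv_of_LAv_neg la⟩
        | dn he' => exact Or.inr ⟨_, _, rfl, he', la⟩
      · injection hx with hx; subst hx
        exact Or.inl ⟨C, he, ra⟩
    exact ih Γ' Δ' (fun B hB => hL B (List.mem_cons_of_mem _ hB))
      (fun B hB => by cases hB; exact hrm)
  | negR _ ih =>
    intro Γ' Δ' hL hR
    rename_i Γ A _
    have hlm : LM A Γ' Δ' := by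
      rcases hR (.neg A) rfl with ⟨C, he, ra⟩ | ⟨X, C, hx, he, la⟩
      · cases he with
        | neg he' => exact Or.inl ⟨_, he', LAv_of_RAv_neg ra⟩
        | dn he' => exact Or.inr ⟨_, _, rfl, he', ra⟩
      · injection hx with hx; subst hx
        exact Or.inl ⟨C, he, la⟩
    refine ih Γ' Δ' (fun B hB => ?_) (fun B hB => nomatch hB)
    rcases List.mem_cons.mp hB with h | h
    · subst h; exact hlm
    · exact hL B h
  | andL _ ih =>
    intro Γ' Δ' hL hR
    rename_i Γ Δ A B _
    rcases hL (.and A B) (by simp) with ⟨C, he, la⟩ | ⟨X, C, hx, he, ra⟩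
    · cases he with
      | and heA heB =>
        rename_i D E
        refine LAv_elim la (Cl.andL ?_)
        refine ih (D :: E :: Γ') Δ' (fun F hF => ?_)
          (fun F hF => RM_mono (hR F hF)
            (fun _ h => List.mem_cons_of_mem _ (List.mem_cons_of_mem _ h)) (fun _ h => h))
        rcases List.mem_cons.mp hF with h | h
        · subst h; exact Or.inl ⟨D, heA, 0, Or.inl (by simp [dnk])⟩
        rcases List.mem_cons.mp h with h | h
        · subst h; exact Or.inl ⟨E, heB, 0, Or.inl (by simp [dnk])⟩
        · exact LM_mono (hL F (List.mem_cons_of_mem _ h))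
            (fun _ h => List.mem_cons_of_mem _ (List.mem_cons_of_mem _ h)) (fun _ h => h)
    · simp at hx
  | andR _ _ ih1 ih2 =>
    intro Γ' Δ' hL hR
    rename_i Γ A B _ _
    rcases hR (.and A B) rfl with ⟨C, he, ra⟩ | ⟨X, C, hx, he, la⟩
    · cases he with
      | and heA heB =>
        rename_i D E
        refine RAv_elim ra (Cl.andR ?_ ?_)
        · refine ih1 Γ' (D :: Δ')
            (fun F hF => LM_mono (hL F hF) (fun _ h => h) (fun _ h => List.mem_cons_of_mem _ h))
            (fun F hF => ?_)
          cases hF; exact Or.inl ⟨D, heA, 0, Or.inl (by simp [dnk])⟩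
        · refine ih2 Γ' (E :: Δ')
            (fun F hF => LM_mono (hL F hF) (fun _ h => h) (fun _ h => List.mem_cons_of_mem _ h))
            (fun F hF => ?_)
          cases hF; exact Or.inl ⟨E, heB, 0, Or.inl (by simp [dnk])⟩
    · simp at hx
  | orL _ _ ih1 ih2 =>
    intro Γ' Δ' hL hR
    rename_i Γ Δ A B _ _
    rcases hL (.or A B) (by simp) with ⟨C, he, la⟩ | ⟨X, C, hx, he, ra⟩
    · cases he with
      | or heA heB =>
        rename_i D E
        refine LAv_elim la (Cl.orL ?_ ?_)
        · refine ih1 (D :: Γ') Δ' (fun F hF => ?_)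
            (fun F hF => RM_mono (hR F hF) (fun _ h => List.mem_cons_of_mem _ h) (fun _ h => h))
          rcases List.mem_cons.mp hF with h | h
          · subst h; exact Or.inl ⟨D, heA, 0, Or.inl (by simp [dnk])⟩
          · exact LM_mono (hL F (List.mem_cons_of_mem _ h))
              (fun _ h => List.mem_cons_of_mem _ h) (fun _ h => h)
        · refine ih2 (E :: Γ') Δ' (fun F hF => ?_)
            (fun F hF => RM_mono (hR F hF) (fun _ h => List.mem_cons_of_mem _ h) (fun _ h => h))
          rcases List.mem_cons.mp hF with h | h
          · subst h; exact Or.inl ⟨E, heB, 0, Or.inl (by simp [dnk])⟩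
          · exact LM_mono (hL F (List.mem_cons_of_mem _ h))
              (fun _ h => List.mem_cons_of_mem _ h) (fun _ h => h)
    · simp at hx
  | orR1 _ ih =>
    intro Γ' Δ' hL hR
    rename_i Γ A B _
    rcases hR (.or A B) rfl with ⟨C, he, ra⟩ | ⟨X, C, hx, he, la⟩
    · cases he with
      | or heA heB =>
        rename_i D E
        refine RAv_elim ra (Cl.orR1 ?_)
        refine ih Γ' (D :: Δ')
          (fun F hF => LM_mono (hL F hF) (fun _ h => h) (fun _ h => List.mem_cons_of_mem _ h))
          (fun F hF => ?_)
        cases hF; exact Or.inl ⟨D, heA, 0, Or.inl (by simp [dnk])⟩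
    · simp at hx
  | orR2 _ ih =>
    intro Γ' Δ' hL hR
    rename_i Γ A B _
    rcases hR (.or A B) rfl with ⟨C, he, ra⟩ | ⟨X, C, hx, he, la⟩
    · cases he with
      | or heA heB =>
        rename_i D E
        refine RAv_elim ra (Cl.orR2 ?_)
        refine ih Γ' (E :: Δ')
          (fun F hF => LM_mono (hL F hF) (fun _ h => h) (fun _ h => List.mem_cons_of_mem _ h))
          (fun F hF => ?_)
        cases hF; exact Or.inl ⟨E, heB, 0, Or.inl (by simp [dnk])⟩
    · simp at hx
  | impL _ _ ih1 ih2 =>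
    intro Γ' Δ' hL hR
    rename_i Γ Δ A B _ _
    rcases hL (.imp A B) (by simp) with ⟨C, he, la⟩ | ⟨X, C, hx, he, ra⟩
    · cases he with
      | imp heA heB =>
        rename_i D E
        refine LAv_elim la (Cl.impL ?_ ?_)
        · refine ih1 Γ' (D :: Δ')
            (fun F hF => LM_mono (hL F (List.mem_cons_of_mem _ hF)) (fun _ h => h)
              (fun _ h => List.mem_cons_of_mem _ h))
            (fun F hF => ?_)
          cases hF; exact Or.inl ⟨D, heA, 0, Or.inl (by simp [dnk])⟩
        · refine ih2 (E :: Γ') Δ' (fun F hF => ?_)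
            (fun F hF => RM_mono (hR F hF) (fun _ h => List.mem_cons_of_mem _ h) (fun _ h => h))
          rcases List.mem_cons.mp hF with h | h
          · subst h; exact Or.inl ⟨E, heB, 0, Or.inl (by simp [dnk])⟩
          · exact LM_mono (hL F (List.mem_cons_of_mem _ h))
              (fun _ h => List.mem_cons_of_mem _ h) (fun _ h => h)
    · simp at hx
  | impR _ ih =>
    intro Γ' Δ' hL hR
    rename_i Γ A B _
    rcases hR (.imp A B) rfl with ⟨C, he, ra⟩ | ⟨X, C, hx, he, la⟩
    · cases he with
      | imp heA heB =>
        rename_i D E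
        refine RAv_elim ra (Cl.impR ?_)
        refine ih (D :: Γ') (E :: Δ') (fun F hF => ?_) (fun F hF => ?_)
        · rcases List.mem_cons.mp hF with h | h
          · subst h; exact Or.inl ⟨D, heA, 0, Or.inl (by simp [dnk])⟩
          · exact LM_mono (hL F h) (fun _ h => List.mem_cons_of_mem _ h)
              (fun _ h => List.mem_cons_of_mem _ h)
        · cases hF; exact Or.inl ⟨E, heB, 0, Or.inl (by simp [dnk])⟩
    · simp at hx
  | allL t _ ih =>
    intro Γ' Δ' hL hR
    rename_i Γ Δ A _
    rcases hL (.all A) (by simp) with ⟨C, he, la⟩ | ⟨X, C, hx, he, ra⟩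
    · cases he with
      | all heA =>
        rename_i D
        refine LAv_elim la (Cl.allL t ?_)
        refine ih (D.inst t :: Γ') Δ' (fun F hF => ?_)
          (fun F hF => RM_mono (hR F hF) (fun _ h => List.mem_cons_of_mem _ h) (fun _ h => h))
        rcases List.mem_cons.mp hF with h | h
        · subst h; exact Or.inl ⟨D.inst t, heA.inst t, 0, Or.inl (by simp [dnk])⟩
        · exact LM_mono (hL F (List.mem_cons_of_mem _ h))
            (fun _ h => List.mem_cons_of_mem _ h) (fun _ h => h)
    · simp at hx
  | allR _ ih =>
    intro Γ' Δ' hL hR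
    rename_i Γ A _
    rcases hR (.all A) rfl with ⟨C, he, ra⟩ | ⟨X, C, hx, he, la⟩
    · cases he with
      | all heA =>
        rename_i D
        refine RAv_elim ra (Cl.allR ?_)
        refine ih (Γ'.map Fm.shift) (D :: Δ'.map Fm.shift) (fun F hF => ?_) (fun F hF => ?_)
        · rcases List.mem_map.mp hF with ⟨G, hG, rfl⟩
          exact LM_mono (LM_shift (hL G hG)) (fun _ h => h) (fun _ h => List.mem_cons_of_mem _ h)
        · cases hF; exact Or.inl ⟨D, heA, 0, Or.inl (by simp [dnk])⟩
    · simp at hx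
  | exL _ ih =>
    intro Γ' Δ' hL hR
    rename_i Γ Δ A _
    rcases hL (.ex A) (by simp) with ⟨C, he, la⟩ | ⟨X, C, hx, he, ra⟩
    · cases he with
      | ex heA =>
        rename_i D
        refine LAv_elim la (Cl.exL ?_)
        refine ih (D :: Γ'.map Fm.shift) (Δ'.map Fm.shift) (fun F hF => ?_) (fun F hF => ?_)
        · rcases List.mem_cons.mp hF with h | h
          · subst h; exact Or.inl ⟨D, heA, 0, Or.inl (by simp [dnk])⟩
          · rcases List.mem_map.mp h with ⟨G, hG, rfl⟩
            exact LM_mono (LM_shift (hL G (List.mem_cons_of_mem _ hG)))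
              (fun _ h => List.mem_cons_of_mem _ h) (fun _ h => h)
        · cases Δ with
          | none => exact nomatch hF
          | some G =>
            cases hF
            exact RM_mono (RM_shift (hR G rfl)) (fun _ h => List.mem_cons_of_mem _ h)
              (fun _ h => h)
    · simp at hx
  | exR t _ ih =>
    intro Γ' Δ' hL hR
    rename_i Γ A _
    rcases hR (.ex A) rfl with ⟨C, he, ra⟩ | ⟨X, C, hx, he, la⟩
    · cases he with
      | ex heA =>
        rename_i D
        refine RAv_elim ra (Cl.exR t ?_)
        refine ih Γ' (D.inst t :: Δ')
          (fun F hF => LM_mono (hL F hF) (fun _ h => h) (fun _ h => List.mem_cons_of_mem _ h))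
          (fun F hF => ?_)
        cases hF; exact Or.inl ⟨D.inst t, heA.inst t, 0, Or.inl (by simp [dnk])⟩
    · simp at hx
/-! ### Forward direction: classical proofs give constructive proofs of translations -/

theorem map_kgg_shift (Γ : List Fm) :
    (Γ.map Fm.shift).map Fm.kgg = (Γ.map Fm.kgg).map Fm.shift := by
  induction Γ with
  | nil => rfl
  | cons A Γ ih => simp [ih, kgg_shift]

theorem map_nkin_shift (Δ : List Fm) :
    (Δ.map Fm.shift).map (fun B => Fm.neg B.kin)
      = (Δ.map (fun B => Fm.neg B.kin)).map Fm.shift := by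
  induction Δ with
  | nil => rfl
  | cons A Δ ih =>
    simp only [List.map_cons, ih, List.cons.injEq, and_true]
    show Fm.neg (A.shift).kin = Fm.shift (.neg A.kin)
    rw [kin_shift]; rfl

theorem map_shift_comm (Γ Δ : List Fm) :
    (Γ.map Fm.shift).map Fm.kgg ++ (Δ.map Fm.shift).map (fun B => Fm.neg B.kin)
      = (Γ.map Fm.kgg ++ Δ.map (fun B => Fm.neg B.kin)).map Fm.shift := by
  rw [List.map_append, map_kgg_shift, map_nkin_shift]

theorem fwd {Γ Δ} (h : Cl Γ Δ) :
    Intu (Γ.map Fm.kgg ++ Δ.map (fun B => Fm.neg B.kin)) none := by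
  induction h with
  | ax A =>
    show Intu [A.kgg, .neg A.kin] none
    rw [kgg_eq]
    exact Intu.negL (Intu.ax _)
  | perm p q _ ih => exact Intu.perm ((p.map _).append (q.map _)) ih
  | contrL _ ih => exact Intu.contrL ih
  | contrR _ ih =>
    refine Intu.perm List.perm_middle.symm (Intu.contrL (Intu.perm ?_ ih))
    exact List.perm_middle.trans (List.Perm.cons _ List.perm_middle)
  | weakL _ ih => exact Intu.weakL ih
  | weakR _ ih => exact Intu.perm List.perm_middle.symm (Intu.weakL ih)
  | topR => exact Intu.perm List.perm_middle.symm (Intu.negL Intu.topR)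
  | botL => exact Intu.negL (Intu.negR Intu.botL)
  | negL _ ih =>
    refine Intu.negL (Intu.negR (Intu.negL ?_))
    rw [kgg_eq]
    exact Intu.negR (Intu.perm List.perm_middle ih)
  | negR _ ih =>
    exact Intu.perm List.perm_middle.symm (Intu.negL (Intu.negR ih))
  | andL _ ih => exact Intu.negL (Intu.negR (Intu.andL ih))
  | andR _ _ ih1 ih2 =>
    refine Intu.perm List.perm_middle.symm (Intu.negL (Intu.andR ?_ ?_))
    · rw [kgg_eq]; exact Intu.negR (Intu.perm List.perm_middle ih1)
    · rw [kgg_eq]; exact Intu.negR (Intu.perm List.perm_middle ih2)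
  | orL _ _ ih1 ih2 => exact Intu.negL (Intu.negR (Intu.orL ih1 ih2))
  | orR1 _ ih =>
    refine Intu.perm List.perm_middle.symm (Intu.negL (Intu.orR1 ?_))
    rw [kgg_eq]; exact Intu.negR (Intu.perm List.perm_middle ih)
  | orR2 _ ih =>
    refine Intu.perm List.perm_middle.symm (Intu.negL (Intu.orR2 ?_))
    rw [kgg_eq]; exact Intu.negR (Intu.perm List.perm_middle ih)
  | impL _ _ ih1 ih2 =>
    refine Intu.negL (Intu.negR (Intu.impL ?_ ih2))
    rw [kgg_eq]; exact Intu.negR (Intu.perm List.perm_middle ih1)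
  | impR _ ih =>
    rename_i Γ Δ A B _
    refine Intu.perm List.perm_middle.symm (Intu.negL (Intu.impR ?_))
    rw [kgg_eq B]
    refine Intu.negR (Intu.perm ?_ ih)
    exact (List.Perm.cons _ List.perm_middle).trans (List.Perm.swap _ _ _)
  | allL t _ ih =>
    refine Intu.negL (Intu.negR (Intu.allL t ?_))
    rw [← kgg_inst]
    exact ih
  | allR _ ih =>
    rename_i Γ Δ A _
    refine Intu.perm List.perm_middle.symm (Intu.negL (Intu.allR ?_))
    rw [kgg_eq]
    refine Intu.negR (Intu.perm ?_ ih)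
    rw [← map_shift_comm]
    exact List.perm_middle
  | exL _ ih =>
    rename_i Γ Δ A _
    refine Intu.negL (Intu.negR (Intu.exL ?_))
    show Intu (A.kgg ::
      (Γ.map Fm.kgg ++ Δ.map (fun B => Fm.neg B.kin)).map Fm.shift) none
    rw [← map_shift_comm]
    exact ih
  | exR t _ ih =>
    refine Intu.perm List.perm_middle.symm (Intu.negL (Intu.exR t ?_))
    rw [← kgg_inst, kgg_eq]
    exact Intu.negR (Intu.perm List.perm_middle ih)

theorem stmt16 (A : Fm) : Cl [] [A] ↔ Intu [] (some A.kgg) := by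
  constructor
  · intro h
    have h' := fwd h
    rw [kgg_eq]
    exact Intu.negR h'
  · intro h
    refine bmain h [] [A] (fun B hB => nomatch hB) (fun B hB => ?_)
    cases hB
    exact Or.inl ⟨A, er_kgg A, 0, Or.inl (by simp [dnk])⟩
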